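/- In a k-partite k-uniform hypergraph G (vertex set partitioned into parts V_1, …, V_k, each hyperedge containing exactly one vertex from each part), vertex separability implies edge separability: if every pair of distinct vertices in the same part V_i is separable (there exists j ≠ i such that every path between them uses a vertex of V_j), then every pair of distinct hyperedges e, e' is separable (there exists j ∈ [k] such that every path from a vertex of e to a vertex of e' uses a vertex of V_j). -/

import Mathlib

/-- A `k`-partite `k`-uniform hypergraph: vertices `V` with parts indexed by `Fin k`,
hyperedges indexed by `E`, each hyperedge selecting exactly one vertex per part. -/
structure KHypergraph (k : ℕ) (V E : Type) where
  part : V → Fin k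
  vert : E → Fin k → V
  hpart : ∀ e i, part (vert e i) = i

namespace KHypergraph

variable {k : ℕ} {V E : Type}

/-- Vertex `v` belongs to hyperedge `e`. -/
def Mem (G : KHypergraph k V E) (v : V) (e : E) : Prop :=
  G.vert e (G.part v) = v

/-- Two vertices are adjacent if they are both contained in a common hyperedge. -/
def Adj (G : KHypergraph k V E) (u v : V) : Prop :=
  ∃ e : E, G.Mem u e ∧ G.Mem v e

/-- `l` is an `s`–`t` path: a nonempty sequence of vertices starting at `s`, ending at `t`,
with consecutive vertices contained in a common hyperedge. -/
def IsPath (G : KHypergraph k V E) (s t : V) (l : List V) : Prop :=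
  l.Chain' G.Adj ∧ l.head? = some s ∧ l.getLast? = some t

/-- Vertex separability: every two distinct vertices of the same part `V_i` can be
separated by removing some part `V_j`, `j ≠ i`. -/
def VertexSeparable (G : KHypergraph k V E) : Prop :=
  ∀ v v' : V, v ≠ v' → G.part v = G.part v' →
    ∃ j : Fin k, j ≠ G.part v ∧
      ∀ l : List V, G.IsPath v v' l → ∃ w ∈ l, G.part w = j

/-- Edge separability: every two distinct hyperedges can be separated by removing
some part `V_j`. -/
def EdgeSeparable (G : KHypergraph k V E) : Prop :=
  ∀ e e' : E, G.vert e ≠ G.vert e' →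
    ∃ j : Fin k, ∀ (v v' : V) (l : List V), G.Mem v e → G.Mem v' e' →
      G.IsPath v v' l → ∃ w ∈ l, G.part w = j

/-- The axis-parallel line in `ℝ^k` representing a vertex `v` of part `i = G.part v`:
all coordinates `j ≠ i` are fixed to `L v j`, coordinate `i` is free. -/
def lineOf (G : KHypergraph k V E) (L : V → Fin k → ℝ) (v : V) : Set (Fin k → ℝ) :=
  {x | ∀ j : Fin k, j ≠ G.part v → x j = L v j}

/-- `(p, L)` is an axis-parallel point line cover representation of `G` in `ℝ^k`:
hyperedges map to pairwise distinct points, vertices map to pairwise distinct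
axis-parallel lines (part `V_i` to direction `i`), and hypergraph incidence coincides
with geometric incidence. -/
def Represents (G : KHypergraph k V E) (p : E → Fin k → ℝ) (L : V → Fin k → ℝ) : Prop :=
  Function.Injective p ∧
  (∀ v v' : V, v ≠ v' → G.lineOf L v ≠ G.lineOf L v') ∧
  (∀ (v : V) (e : E), G.Mem v e ↔ p e ∈ G.lineOf L v)

/-- The auxiliary graph `G_i` on the hyperedges: `e` and `e'` are adjacent iff they
share a vertex in a part `V_j` with `j ≠ i`. -/
def GiAdj (G : KHypergraph k V E) (i : Fin k) (e e' : E) : Prop :=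
  ∃ v : V, G.Mem v e ∧ G.Mem v e' ∧ G.part v ≠ i

end KHypergraph

/-- In a `k`-partite `k`-uniform hypergraph, vertex separability implies edge
separability. -/
theorem stmt2 {k : ℕ} {V E : Type} (G : KHypergraph k V E)
    (h : G.VertexSeparable) : G.EdgeSeparable := by
  intro e e' hne
  obtain ⟨i, hi⟩ : ∃ i, G.vert e i ≠ G.vert e' i := by
    by_contra hc
    push_neg at hc
    exact hne (funext hc)
  set v := G.vert e i with hv
  set v' := G.vert e' i with hv'
  have hpv : G.part v = i := G.hpart e i
  have hpv' : G.part v' = i := G.hpart e' i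
  obtain ⟨j, hji, hsep⟩ := h v v' hi (by rw [hpv, hpv'])
  refine ⟨j, fun u u' l hu hu' hl => ?_⟩
  obtain ⟨hchain, hhead, hlast⟩ := hl
  have hlne : l ≠ [] := by rintro rfl; simp at hhead
  -- build the extended path v :: l ++ [v']
  have hmve : G.Mem v e := by simp [KHypergraph.Mem, hpv]; rfl
  have hmv'e : G.Mem v' e' := by simp [KHypergraph.Mem, hpv']; rfl
  have hpath : G.IsPath v v' ((v :: l) ++ [v']) := by
    refine ⟨?_, by simp, ?_⟩
    · unfold List.Chain'; rw [List.isChain_append]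
      refine ⟨?_, by simp, ?_⟩
      · rw [List.isChain_cons]
        refine ⟨?_, hchain⟩
        intro y hy
        rw [List.head?_eq_head hlne] at hhead hy
        obtain rfl : y = u := by
          rw [hhead] at hy; exact (Option.some_inj.mp hy).symm
        exact ⟨e, hmve, hu⟩
      · intro x hx y hy
        simp only [List.head?_cons, Option.mem_def, Option.some_inj] at hy
        subst hy
        have hg : (v :: l).getLast? = some u' := by
          rw [← hlast]
          cases l with
          | nil => exact absurd rfl hlne
          | cons a t => simp [List.getLast?_cons_cons]
        rw [hg] at hx
        obtain rfl : x = u' := Option.some_inj.mp (Option.mem_def.mp hx).symm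
        exact ⟨e', hu', hmv'e⟩
    · rw [List.getLast?_append]; simp
  obtain ⟨w, hwmem, hwj⟩ := hsep _ hpath
  simp only [List.cons_append, List.mem_cons, List.mem_append, List.mem_singleton] at hwmem
  rcases hwmem with rfl | hw | hw
  · exact absurd hwj.symm hji
  · exact ⟨w, hw, hwj⟩
  · rcases hw with rfl | hw
    · exact absurd (by rw [← hwj, hpv', ← hpv]) hji
    · exact absurd hw (List.not_mem_nil (a := w))
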